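/- arXiv:math/0609551 — 4 statements merged into one kernel-verified Lean document; each statement's English description precedes it below -/
import Mathlib

section
/- Let A be the preprojective algebra of type A_n^{(1)} over a field k, presented by the quiver with vertices ℤ/(n+1)ℤ, arrows (i|i±1), and relations (i|i+1|i) = (i|i-1|i). Every element of A is a k-linear combination of the elements P(i,l,m) := (i|i+1|i)^m (i|i+1|…|i+l) for l ≥ 0 and P(i,l,m) := (i|i+1|i)^m (i|i-1|…|i+l) for l < 0 (with i ∈ ℤ/(n+1)ℤ, l ∈ ℤ, m ≥ 0). -/
/-! STATEMENT 5: the preprojective algebra of type A_n^{(1)}, presented by the quiver with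
vertices ℤ/(n+1)ℤ, arrows (i|i±1) and relations (i|i+1|i) = (i|i-1|i), is spanned as a
k-vector space by the elements P(i,l,m) = (i|i+1|i)^m (i|i+1|…|i+l) (l ≥ 0) and
P(i,l,m) = (i|i+1|i)^m (i|i-1|…|i+l) (l < 0). -/

/-- Generators of the preprojective algebra: the idempotent (trivial path) `idem i` at vertex
`i`, the arrow `up i = (i|i+1)` and the arrow `down i = (i|i-1)`. -/
inductive PreprojGen (n : ℕ) : Type
  | idem : ZMod (n + 1) → PreprojGen n
  | up : ZMod (n + 1) → PreprojGen n
  | down : ZMod (n + 1) → PreprojGen n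

open FreeAlgebra PreprojGen in
/-- The path-algebra and preprojective relations on the free algebra on the generators. -/
inductive PreprojRel (k : Type*) [CommRing k] (n : ℕ) :
    FreeAlgebra k (PreprojGen n) → FreeAlgebra k (PreprojGen n) → Prop
  | idem_mul (i : ZMod (n + 1)) :
      PreprojRel k n (ι k (idem i) * ι k (idem i)) (ι k (idem i))
  | idem_orth (i j : ZMod (n + 1)) (h : i ≠ j) :
      PreprojRel k n (ι k (idem i) * ι k (idem j)) 0
  | idem_sum : PreprojRel k n (∑ i : ZMod (n + 1), ι k (idem i)) 1
  | up_src (i : ZMod (n + 1)) :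
      PreprojRel k n (ι k (idem i) * ι k (up i)) (ι k (up i))
  | up_tgt (i : ZMod (n + 1)) :
      PreprojRel k n (ι k (up i) * ι k (idem (i + 1))) (ι k (up i))
  | up_src_orth (i j : ZMod (n + 1)) (h : j ≠ i) :
      PreprojRel k n (ι k (idem j) * ι k (up i)) 0
  | up_tgt_orth (i j : ZMod (n + 1)) (h : j ≠ i + 1) :
      PreprojRel k n (ι k (up i) * ι k (idem j)) 0
  | down_src (i : ZMod (n + 1)) :
      PreprojRel k n (ι k (idem i) * ι k (down i)) (ι k (down i))
  | down_tgt (i : ZMod (n + 1)) :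
      PreprojRel k n (ι k (down i) * ι k (idem (i - 1))) (ι k (down i))
  | down_src_orth (i j : ZMod (n + 1)) (h : j ≠ i) :
      PreprojRel k n (ι k (idem j) * ι k (down i)) 0
  | down_tgt_orth (i j : ZMod (n + 1)) (h : j ≠ i - 1) :
      PreprojRel k n (ι k (down i) * ι k (idem j)) 0
  | preproj (i : ZMod (n + 1)) :
      PreprojRel k n (ι k (up i) * ι k (down (i + 1))) (ι k (down i) * ι k (up (i - 1)))

/-- The preprojective algebra of type A_n^{(1)} over k. -/
abbrev PreprojAlg (k : Type*) [CommRing k] (n : ℕ) := RingQuot (PreprojRel k n)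

variable (k : Type*) [Field k] (n : ℕ)

/-- The idempotent (i). -/
noncomputable def eA (i : ZMod (n + 1)) : PreprojAlg k n :=
  RingQuot.mkAlgHom k (PreprojRel k n) (FreeAlgebra.ι k (PreprojGen.idem i))

/-- The arrow (i|i+1). -/
noncomputable def uA (i : ZMod (n + 1)) : PreprojAlg k n :=
  RingQuot.mkAlgHom k (PreprojRel k n) (FreeAlgebra.ι k (PreprojGen.up i))

/-- The arrow (i|i-1). -/
noncomputable def dA (i : ZMod (n + 1)) : PreprojAlg k n :=
  RingQuot.mkAlgHom k (PreprojRel k n) (FreeAlgebra.ι k (PreprojGen.down i))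

/-- The path (i|i+1|…|i+l) (going up `l` steps from `i`); for `l = 0` the trivial path (i). -/
noncomputable def chainUp : ℕ → ZMod (n + 1) → PreprojAlg k n
  | 0, i => eA k n i
  | l + 1, i => uA k n i * chainUp l (i + 1)

/-- The path (i|i-1|…|i-l) (going down `l` steps from `i`); for `l = 0` the trivial path. -/
noncomputable def chainDown : ℕ → ZMod (n + 1) → PreprojAlg k n
  | 0, i => eA k n i
  | l + 1, i => dA k n i * chainDown l (i - 1)

/-- The normal-form element P(i,l,m) = (i|i+1|i)^m (i|i±1|…|i+l). -/
noncomputable def Pel (i : ZMod (n + 1)) (l : ℤ) (m : ℕ) : PreprojAlg k n :=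
  (uA k n i * dA k n (i + 1)) ^ m *
    (if 0 ≤ l then chainUp k n l.toNat i else chainDown k n (-l).toNat i)

namespace PreprojAux

variable {k : Type*} [Field k] {n : ℕ}

local notation "e" => eA k n
local notation "u" => uA k n
local notation "d" => dA k n

open RingQuot PreprojGen

private lemma rel {x y : FreeAlgebra k (PreprojGen n)} (h : PreprojRel k n x y) :
    RingQuot.mkAlgHom k (PreprojRel k n) x = RingQuot.mkAlgHom k (PreprojRel k n) y :=
  RingQuot.mkAlgHom_rel k h

lemma e_e (i : ZMod (n + 1)) : e i * e i = e i := by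
  simpa [eA, map_mul] using rel (PreprojRel.idem_mul (k := k) (n := n) i)

lemma e_e_ne {i j : ZMod (n + 1)} (h : i ≠ j) : e i * e j = 0 := by
  simpa [eA, map_mul] using rel (PreprojRel.idem_orth (k := k) (n := n) i j h)

lemma e_sum : ∑ i : ZMod (n + 1), e i = (1 : PreprojAlg k n) := by
  simpa [eA, map_sum] using rel (PreprojRel.idem_sum (k := k) (n := n))

lemma e_u (i : ZMod (n + 1)) : e i * u i = u i := by
  simpa [eA, uA, map_mul] using rel (PreprojRel.up_src (k := k) (n := n) i)

lemma u_e (i : ZMod (n + 1)) : u i * e (i + 1) = u i := by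
  simpa [eA, uA, map_mul] using rel (PreprojRel.up_tgt (k := k) (n := n) i)

lemma e_u_ne {i j : ZMod (n + 1)} (h : j ≠ i) : e j * u i = 0 := by
  simpa [eA, uA, map_mul] using rel (PreprojRel.up_src_orth (k := k) (n := n) i j h)

lemma u_e_ne {i j : ZMod (n + 1)} (h : j ≠ i + 1) : u i * e j = 0 := by
  simpa [eA, uA, map_mul] using rel (PreprojRel.up_tgt_orth (k := k) (n := n) i j h)

lemma e_d (i : ZMod (n + 1)) : e i * d i = d i := by
  simpa [eA, dA, map_mul] using rel (PreprojRel.down_src (k := k) (n := n) i)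

lemma d_e (i : ZMod (n + 1)) : d i * e (i - 1) = d i := by
  simpa [eA, dA, map_mul] using rel (PreprojRel.down_tgt (k := k) (n := n) i)

lemma e_d_ne {i j : ZMod (n + 1)} (h : j ≠ i) : e j * d i = 0 := by
  simpa [eA, dA, map_mul] using rel (PreprojRel.down_src_orth (k := k) (n := n) i j h)

lemma d_e_ne {i j : ZMod (n + 1)} (h : j ≠ i - 1) : d i * e j = 0 := by
  simpa [eA, dA, map_mul] using rel (PreprojRel.down_tgt_orth (k := k) (n := n) i j h)

lemma preproj (i : ZMod (n + 1)) : u i * d (i + 1) = d i * u (i - 1) := by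
  simpa [uA, dA, map_mul] using rel (PreprojRel.preproj (k := k) (n := n) i)

end PreprojAux
namespace PreprojAux

variable {k : Type*} [Field k] {n : ℕ}

local notation "e" => eA k n
local notation "u" => uA k n
local notation "d" => dA k n
local notation "cu" => chainUp k n
local notation "cd" => chainDown k n

lemma chainUp_e (l : ℕ) (i : ZMod (n + 1)) : cu l i * e (i + l) = cu l i := by
  induction l generalizing i with
  | zero => simpa [chainUp] using e_e i
  | succ l ih =>
    have : i + ((l + 1 : ℕ) : ZMod (n + 1)) = (i + 1) + (l : ℕ) := by push_cast; ring
    rw [chainUp, this, mul_assoc, ih]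

lemma chainUp_e_ne (l : ℕ) {i j : ZMod (n + 1)} (h : j ≠ i + l) : cu l i * e j = 0 := by
  induction l generalizing i with
  | zero =>
    simp only [Nat.cast_zero, add_zero] at h
    simpa [chainUp] using e_e_ne (Ne.symm h)
  | succ l ih =>
    have h' : j ≠ (i + 1) + (l : ℕ) := by
      intro hh; apply h; rw [hh]; push_cast; ring
    rw [chainUp, mul_assoc, ih h', mul_zero]

lemma chainDown_e (l : ℕ) (i : ZMod (n + 1)) : cd l i * e (i - l) = cd l i := by
  induction l generalizing i with
  | zero => simpa [chainDown] using e_e i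
  | succ l ih =>
    have : i - ((l + 1 : ℕ) : ZMod (n + 1)) = (i - 1) - (l : ℕ) := by push_cast; ring
    rw [chainDown, this, mul_assoc, ih]

lemma chainDown_e_ne (l : ℕ) {i j : ZMod (n + 1)} (h : j ≠ i - l) : cd l i * e j = 0 := by
  induction l generalizing i with
  | zero =>
    simp only [Nat.cast_zero, sub_zero] at h
    simpa [chainDown] using e_e_ne (Ne.symm h)
  | succ l ih =>
    have h' : j ≠ (i - 1) - (l : ℕ) := by
      intro hh; apply h; rw [hh]; push_cast; ring
    rw [chainDown, mul_assoc, ih h', mul_zero]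

lemma chainUp_u (l : ℕ) (i : ZMod (n + 1)) : cu l i * u (i + l) = cu (l + 1) i := by
  induction l generalizing i with
  | zero => simp [chainUp, e_u, u_e]
  | succ l ih =>
    have : i + ((l + 1 : ℕ) : ZMod (n + 1)) = (i + 1) + (l : ℕ) := by push_cast; ring
    rw [chainUp, this, mul_assoc, ih]
    rfl

lemma chainDown_d (l : ℕ) (i : ZMod (n + 1)) : cd l i * d (i - l) = cd (l + 1) i := by
  induction l generalizing i with
  | zero => simp [chainDown, e_d, d_e]
  | succ l ih =>
    have : i - ((l + 1 : ℕ) : ZMod (n + 1)) = (i - 1) - (l : ℕ) := by push_cast; ring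
    rw [chainDown, this, mul_assoc, ih]
    rfl

lemma chainUp_d (l : ℕ) (i : ZMod (n + 1)) :
    cu (l + 1) i * d (i + (l + 1 : ℕ)) = (u i * d (i + 1)) * cu l i := by
  induction l generalizing i with
  | zero =>
    simp only [chainUp, Nat.cast_one]
    rw [mul_assoc]
    have h1 : e (i + 1) * d (i + 1) = d (i + 1) := e_d _
    have h2 : d (i + 1) * e i = d (i + 1) := by
      have := d_e (k := k) (n := n) (i + 1)
      rwa [add_sub_cancel_right] at this
    calc u i * (e (i + 1) * d (i + 1)) = u i * d (i + 1) := by rw [h1]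
      _ = u i * (d (i + 1) * e i) := by rw [h2]
      _ = u i * d (i + 1) * e i := by rw [mul_assoc]

  | succ l ih =>
    have hc : i + ((l + 1 + 1 : ℕ) : ZMod (n + 1)) = (i + 1) + ((l + 1 : ℕ) : ZMod (n + 1)) := by
      push_cast; ring
    have key : u (i + 1) * d (i + 1 + 1) = d (i + 1) * u i := by
      have := preproj (k := k) (n := n) (i + 1)
      rwa [add_sub_cancel_right] at this
    calc cu (l + 2) i * d (i + ((l + 1 + 1 : ℕ) : ZMod (n + 1)))
        = u i * (cu (l + 1) (i + 1) * d ((i + 1) + ((l + 1 : ℕ) : ZMod (n + 1)))) := by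
          rw [hc, chainUp, mul_assoc]
      _ = u i * ((u (i + 1) * d (i + 1 + 1)) * cu l (i + 1)) := by rw [ih]
      _ = u i * ((d (i + 1) * u i) * cu l (i + 1)) := by rw [key]
      _ = (u i * d (i + 1)) * (u i * cu l (i + 1)) := by simp only [mul_assoc]
      _ = (u i * d (i + 1)) * cu (l + 1) i := rfl

lemma chainDown_u (l : ℕ) (i : ZMod (n + 1)) :
    cd (l + 1) i * u (i - (l + 1 : ℕ)) = (u i * d (i + 1)) * cd l i := by
  induction l generalizing i with
  | zero =>
    simp only [chainDown, Nat.cast_one]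
    rw [mul_assoc]
    have h1 : e (i - 1) * u (i - 1) = u (i - 1) := e_u _
    have h2 : u (i - 1) * e i = u (i - 1) := by
      have := u_e (k := k) (n := n) (i - 1)
      rwa [sub_add_cancel] at this
    have key : d i * u (i - 1) = u i * d (i + 1) := (preproj i).symm
    calc d i * (e (i - 1) * u (i - 1)) = d i * u (i - 1) := by rw [h1]
      _ = d i * (u (i - 1) * e i) := by rw [h2]
      _ = (d i * u (i - 1)) * e i := by rw [mul_assoc]
      _ = (u i * d (i + 1)) * e i := by rw [key]
  | succ l ih =>
    have hc : i - ((l + 1 + 1 : ℕ) : ZMod (n + 1)) = (i - 1) - ((l + 1 : ℕ) : ZMod (n + 1)) := by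
      push_cast; ring
    have key : u (i - 1) * d (i - 1 + 1) = d (i - 1) * u (i - 1 - 1) := preproj (i - 1)
    calc cd (l + 2) i * u (i - ((l + 1 + 1 : ℕ) : ZMod (n + 1)))
        = d i * (cd (l + 1) (i - 1) * u ((i - 1) - ((l + 1 : ℕ) : ZMod (n + 1)))) := by
          rw [hc, chainDown, mul_assoc]
      _ = d i * ((u (i - 1) * d (i - 1 + 1)) * cd l (i - 1)) := by rw [ih]
      _ = d i * ((u (i - 1) * d i) * cd l (i - 1)) := by rw [sub_add_cancel]
      _ = (d i * u (i - 1)) * (d i * cd l (i - 1)) := by simp only [mul_assoc]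
      _ = (u i * d (i + 1)) * cd (l + 1) i := by rw [← preproj i]; rfl

end PreprojAux
namespace PreprojAux

variable {k : Type*} [Field k] {n : ℕ}

local notation "e" => eA k n
local notation "u" => uA k n
local notation "d" => dA k n
local notation "cu" => chainUp k n
local notation "cd" => chainDown k n

/-- The span of the normal-form elements. -/
noncomputable def Pspan (k : Type*) [Field k] (n : ℕ) : Submodule k (PreprojAlg k n) :=
  Submodule.span k {x : PreprojAlg k n | ∃ (i : ZMod (n + 1)) (l : ℤ) (m : ℕ),
    x = Pel k n i l m}

lemma Pel_mem (i : ZMod (n + 1)) (l : ℤ) (m : ℕ) : Pel k n i l m ∈ Pspan k n :=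
  Submodule.subset_span ⟨i, l, m, rfl⟩

lemma Pel_nonneg {l : ℤ} (h : 0 ≤ l) (i : ZMod (n + 1)) (m : ℕ) :
    Pel k n i l m = (u i * d (i + 1)) ^ m * cu l.toNat i := by
  rw [Pel, if_pos h]

lemma Pel_neg {l : ℤ} (h : l < 0) (i : ZMod (n + 1)) (m : ℕ) :
    Pel k n i l m = (u i * d (i + 1)) ^ m * cd (-l).toNat i := by
  rw [Pel, if_neg (by omega)]

lemma Pel_mul_e (i : ZMod (n + 1)) (l : ℤ) (m : ℕ) (j : ZMod (n + 1)) :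
    Pel k n i l m * e j ∈ Pspan k n := by
  rcases le_or_gt 0 l with h | h
  · rw [Pel_nonneg h, mul_assoc]
    by_cases hj : j = i + (l.toNat : ZMod (n + 1))
    · subst hj; rw [chainUp_e, ← Pel_nonneg h]; exact Pel_mem i l m
    · rw [chainUp_e_ne _ hj, mul_zero]; exact zero_mem _
  · rw [Pel_neg h, mul_assoc]
    by_cases hj : j = i - ((-l).toNat : ZMod (n + 1))
    · subst hj; rw [chainDown_e, ← Pel_neg h]; exact Pel_mem i l m
    · rw [chainDown_e_ne _ hj, mul_zero]; exact zero_mem _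

lemma Pel_mul_u (i : ZMod (n + 1)) (l : ℤ) (m : ℕ) (j : ZMod (n + 1)) :
    Pel k n i l m * u j ∈ Pspan k n := by
  rcases le_or_gt 0 l with h | h
  · by_cases hj : j = i + (l.toNat : ZMod (n + 1))
    · subst hj
      rw [Pel_nonneg h, mul_assoc, chainUp_u]
      have h1 : (0 : ℤ) ≤ l + 1 := by omega
      have h2 : (l + 1).toNat = l.toNat + 1 := by omega
      rw [show l.toNat + 1 = (l + 1).toNat from h2.symm, ← Pel_nonneg h1]
      exact Pel_mem i (l + 1) m
    · have hz : Pel k n i l m * e j = 0 := by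
        rw [Pel_nonneg h, mul_assoc, chainUp_e_ne _ hj, mul_zero]
      rw [← e_u j, ← mul_assoc, hz, zero_mul]
      exact zero_mem _
  · obtain ⟨t, ht⟩ : ∃ t, (-l).toNat = t + 1 := ⟨(-l).toNat - 1, by omega⟩
    by_cases hj : j = i - (((-l).toNat : ℕ) : ZMod (n + 1))
    · subst hj
      rw [Pel_neg h, ht, mul_assoc, chainDown_u, ← mul_assoc, ← pow_succ]
      by_cases hl : l + 1 < 0
      · have h2 : (-(l + 1)).toNat = t := by omega
        rw [show t = (-(l + 1)).toNat from h2.symm, ← Pel_neg hl]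
        exact Pel_mem i (l + 1) (m + 1)
      · have hl0 : l = -1 := by omega
        have ht0 : t = 0 := by omega
        subst hl0 ht0
        have : Pel k n i 0 (m + 1) = (u i * d (i + 1)) ^ (m + 1) * cd 0 i := by
          rw [Pel_nonneg le_rfl]; rfl
        rw [← this]
        exact Pel_mem i 0 (m + 1)
    · have hz : Pel k n i l m * e j = 0 := by
        rw [Pel_neg h, mul_assoc, chainDown_e_ne _ hj, mul_zero]
      rw [← e_u j, ← mul_assoc, hz, zero_mul]
      exact zero_mem _

lemma Pel_mul_d (i : ZMod (n + 1)) (l : ℤ) (m : ℕ) (j : ZMod (n + 1)) :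
    Pel k n i l m * d j ∈ Pspan k n := by
  rcases le_or_gt 0 l with h | h
  · by_cases hj : j = i + (l.toNat : ZMod (n + 1))
    · subst hj
      rcases Nat.eq_zero_or_pos l.toNat with h0 | h0
      · have hl0 : l = 0 := by omega
        subst hl0
        rw [Pel_nonneg le_rfl]
        have : cu (0 : ℤ).toNat i * d (i + ((0 : ℤ).toNat : ZMod (n + 1)))
            = e i * d i := by norm_num [chainUp]
        rw [mul_assoc, this, e_d]
        have hPel : Pel k n i (-1) m = (u i * d (i + 1)) ^ m * d i := by
          rw [Pel_neg (by norm_num)]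
          norm_num [chainDown, d_e]
        rw [← hPel]
        exact Pel_mem i (-1) m
      · obtain ⟨t, ht⟩ : ∃ t, l.toNat = t + 1 := ⟨l.toNat - 1, by omega⟩
        rw [Pel_nonneg h, ht, mul_assoc, chainUp_d, ← mul_assoc, ← pow_succ]
        have h1 : (0 : ℤ) ≤ l - 1 := by omega
        have h2 : (l - 1).toNat = t := by omega
        rw [show t = (l - 1).toNat from h2.symm, ← Pel_nonneg h1]
        exact Pel_mem i (l - 1) (m + 1)
    · have hz : Pel k n i l m * e j = 0 := by
        rw [Pel_nonneg h, mul_assoc, chainUp_e_ne _ hj, mul_zero]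
      rw [← e_d j, ← mul_assoc, hz, zero_mul]
      exact zero_mem _
  · by_cases hj : j = i - (((-l).toNat : ℕ) : ZMod (n + 1))
    · subst hj
      rw [Pel_neg h, mul_assoc, chainDown_d]
      have h1 : l - 1 < 0 := by omega
      have h2 : (-(l - 1)).toNat = (-l).toNat + 1 := by omega
      rw [show (-l).toNat + 1 = (-(l - 1)).toNat from h2.symm, ← Pel_neg h1]
      exact Pel_mem i (l - 1) m
    · have hz : Pel k n i l m * e j = 0 := by
        rw [Pel_neg h, mul_assoc, chainDown_e_ne _ hj, mul_zero]
      rw [← e_d j, ← mul_assoc, hz, zero_mul]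
      exact zero_mem _

lemma one_mem_Pspan : (1 : PreprojAlg k n) ∈ Pspan k n := by
  rw [← e_sum]
  refine Submodule.sum_mem _ fun i _ => ?_
  have : e i = Pel k n i 0 0 := by
    rw [Pel_nonneg le_rfl]
    norm_num [chainUp]
  rw [this]
  exact Pel_mem i 0 0

lemma right_mul_closed {a : PreprojAlg k n}
    (hP : ∀ (i : ZMod (n + 1)) (l : ℤ) (m : ℕ), Pel k n i l m * a ∈ Pspan k n) :
    ∀ s ∈ Pspan k n, s * a ∈ Pspan k n := by
  intro s hs
  induction hs using Submodule.span_induction with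
  | mem x hx => obtain ⟨i, l, m, rfl⟩ := hx; exact hP i l m
  | zero => rw [zero_mul]; exact zero_mem _
  | add x y hx hy ihx ihy => rw [add_mul]; exact add_mem ihx ihy
  | smul c x hx ihx => rw [smul_mul_assoc]; exact Submodule.smul_mem _ _ ihx

lemma mul_mem_Pspan (y : FreeAlgebra k (PreprojGen n)) :
    ∀ s ∈ Pspan k n, s * RingQuot.mkAlgHom k (PreprojRel k n) y ∈ Pspan k n := by
  induction y with
  | grade0 r =>
    intro s hs
    rw [AlgHom.commutes, ← Algebra.commutes, ← Algebra.smul_def]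
    exact Submodule.smul_mem _ _ hs
  | grade1 g =>
    cases g with
    | idem i => exact right_mul_closed fun i' l m => Pel_mul_e i' l m i
    | up i => exact right_mul_closed fun i' l m => Pel_mul_u i' l m i
    | down i => exact right_mul_closed fun i' l m => Pel_mul_d i' l m i
  | mul a b ha hb =>
    intro s hs
    rw [map_mul, ← mul_assoc]
    exact hb _ (ha _ hs)
  | add a b ha hb =>
    intro s hs
    rw [map_add, mul_add]
    exact add_mem (ha s hs) (hb s hs)

lemma Pspan_eq_top : Pspan k n = ⊤ := by
  rw [eq_top_iff]
  rintro x -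
  obtain ⟨y, rfl⟩ := RingQuot.mkAlgHom_surjective k (PreprojRel k n) x
  simpa using mul_mem_Pspan y 1 one_mem_Pspan

end PreprojAux
/-- every element of the preprojective algebra of type A_n^{(1)} is a k-linear
combination of the elements P(i,l,m). -/
theorem stmt5 :
    Submodule.span k {x : PreprojAlg k n | ∃ (i : ZMod (n + 1)) (l : ℤ) (m : ℕ),
      x = Pel k n i l m} = ⊤ := by
  exact PreprojAux.Pspan_eq_top
end

section
/- Let 𝒪 = k[x,y,z]/(xy + z^{n+1}) and I_r = (y, z^r)𝒪 for 0 ≤ r ≤ n. Then the monomials x^q z^{m+r} (q ≥ 0, m ≥ 0) and y^q z^m (q > 0, m ≥ 0) form a k-linear basis of I_r. -/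
open MvPolynomial

open AddMonoidAlgebra


noncomputable section AuxAn
variable (k : Type*) [Field k] (n : ℕ)

def psi0 : MvPolynomial (Fin 3) k →ₐ[k] AddMonoidAlgebra k (ℤ × ℤ) :=
  MvPolynomial.aeval
    ![AddMonoidAlgebra.single ((1 : ℤ), (0 : ℤ)) 1,
      -AddMonoidAlgebra.single ((-1 : ℤ), (n : ℤ) + 1) 1,
      AddMonoidAlgebra.single ((0 : ℤ), (1 : ℤ)) 1]

lemma psi0_rel : psi0 k n (X 0 * X 1 + X 2 ^ (n + 1)) = 0 := by
  simp only [psi0, map_add, map_mul, map_pow, MvPolynomial.aeval_X]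
  simp [AddMonoidAlgebra.single_pow, AddMonoidAlgebra.single_mul_single,
    Prod.smul_mk, nsmul_eq_mul, mul_neg]

end AuxAn

/-- The coordinate ring 𝒪 = k[x,y,z]/(xy + z^{n+1}) of the A_n rational double point. -/
abbrev AnRing (k : Type*) [Field k] (n : ℕ) :=
  MvPolynomial (Fin 3) k ⧸
    Ideal.span {(X 0 * X 1 + X 2 ^ (n + 1) : MvPolynomial (Fin 3) k)}

noncomputable section AuxAn2
variable (k : Type*) [Field k] (n : ℕ)

def psi : AnRing k n →ₐ[k] AddMonoidAlgebra k (ℤ × ℤ) :=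
  Ideal.Quotient.liftₐ _ (psi0 k n) (by
    intro a ha
    rw [← RingHom.mem_ker]
    refine Ideal.span_le.mpr ?_ ha
    intro p hp
    simp only [Set.mem_singleton_iff] at hp
    subst hp
    exact psi0_rel k n)

lemma psi_X0 : psi k n (Ideal.Quotient.mk _ (X 0)) = AddMonoidAlgebra.single ((1:ℤ),(0:ℤ)) 1 := by
  show psi0 k n (X 0) = _
  simp [psi0]
lemma psi_X1 : psi k n (Ideal.Quotient.mk _ (X 1)) = -AddMonoidAlgebra.single ((-1:ℤ),(n:ℤ)+1) 1 := by
  show psi0 k n (X 1) = _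
  simp [psi0]
lemma psi_X2 : psi k n (Ideal.Quotient.mk _ (X 2)) = AddMonoidAlgebra.single ((0:ℤ),(1:ℤ)) 1 := by
  show psi0 k n (X 2) = _
  simp [psi0]

lemma li_single : LinearIndependent k
    (fun p : ℤ × ℤ => (AddMonoidAlgebra.single p 1 : AddMonoidAlgebra k (ℤ × ℤ))) :=
  by
    have h := (AddMonoidAlgebra.basis (ℤ × ℤ) k).linearIndependent
    convert h using 1
    funext p
    simp

end AuxAn2

/- STATEMENT 7: in 𝒪 = k[x,y,z]/(xy + z^{n+1}), for 0 ≤ r ≤ n, the ideal I_r = (y, z^r)𝒪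
has the monomials x^q z^{m+r} (q ≥ 0, m ≥ 0) and y^q z^m (q > 0, m ≥ 0) as a k-linear
basis: they are linearly independent over k and k-span I_r. -/
set_option maxHeartbeats 1000000 in
set_option synthInstance.maxHeartbeats 1000000 in
theorem stmt7 (k : Type*) [Field k] (n : ℕ) (hn : 1 ≤ n) (r : ℕ) (hr : r ≤ n) :
    let O := AnRing k n
    let x : O := Ideal.Quotient.mk _ (X 0)
    let y : O := Ideal.Quotient.mk _ (X 1)
    let z : O := Ideal.Quotient.mk _ (X 2)
    let f : (ℕ × ℕ) ⊕ (ℕ × ℕ) → O :=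
      Sum.elim (fun qm => x ^ qm.1 * z ^ (qm.2 + r)) (fun qm => y ^ (qm.1 + 1) * z ^ qm.2)
    LinearIndependent k f ∧
      Submodule.span k (Set.range f) =
        (Ideal.span {y, z ^ r} : Ideal O).restrictScalars k := by
  intro O x y z f
  constructor
  · -- linear independence
    set g : (ℕ × ℕ) ⊕ (ℕ × ℕ) → ℤ × ℤ :=
      Sum.elim (fun qm => ((qm.1 : ℤ), (qm.2 : ℤ) + r))
        (fun qm => (-(qm.1 : ℤ) - 1, ((n : ℤ) + 1) * ((qm.1 : ℤ) + 1) + (qm.2 : ℤ))) with hg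
    have hginj : Function.Injective g := by
      rintro (⟨q, m⟩ | ⟨q, m⟩) (⟨q', m'⟩ | ⟨q', m'⟩) h <;>
        simp only [hg, Sum.elim_inl, Sum.elim_inr, Prod.mk.injEq] at h
      · obtain ⟨h1, h2⟩ := h
        simp only [Sum.inl.injEq, Prod.mk.injEq]; omega
      · omega
      · omega
      · obtain ⟨h1, h2⟩ := h
        have hq : q = q' := by omega
        subst hq
        have hm : (m : ℤ) = m' := by exact_mod_cast add_left_cancel h2
        simp only [Sum.inr.injEq, Prod.mk.injEq]
        exact ⟨trivial, by exact_mod_cast hm⟩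
    set w : (ℕ × ℕ) ⊕ (ℕ × ℕ) → kˣ :=
      Sum.elim (fun _ => 1) (fun qm => (-1) ^ (qm.1 + 1)) with hw
    have hli : LinearIndependent k
        (w • fun i => (AddMonoidAlgebra.single (g i) 1 : AddMonoidAlgebra k (ℤ × ℤ))) :=
      ((li_single k).comp g hginj).units_smul w
    refine LinearIndependent.of_comp (psi k n).toLinearMap ?_
    have hcomp : ⇑(psi k n).toLinearMap ∘ f =
        (w • fun i => (AddMonoidAlgebra.single (g i) 1 : AddMonoidAlgebra k (ℤ × ℤ))) := by
      funext i
      cases i with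
      | inl qm =>
        show psi k n (x ^ qm.1 * z ^ (qm.2 + r)) = _
        rw [map_mul, map_pow, map_pow, psi_X0, psi_X2,
          AddMonoidAlgebra.single_pow, AddMonoidAlgebra.single_pow,
          AddMonoidAlgebra.single_mul_single]
        simp [hw, hg, Prod.smul_mk, nsmul_eq_mul]
      | inr qm =>
        show psi k n (y ^ (qm.1 + 1) * z ^ qm.2) = _
        rw [map_mul, map_pow, map_pow, psi_X1, psi_X2,
          ← neg_one_smul k (AddMonoidAlgebra.single ((-1 : ℤ), (n : ℤ) + 1) (1 : k)), smul_pow,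
          AddMonoidAlgebra.single_pow, AddMonoidAlgebra.single_pow, smul_mul_assoc,
          AddMonoidAlgebra.single_mul_single]
        simp only [hw, hg, Sum.elim_inr, Pi.smul_apply', Units.smul_def,
          Units.val_pow_eq_pow_val, Units.val_neg, Units.val_one, one_pow, mul_one]
        congr 2
        simp only [Prod.smul_mk, Prod.mk_add_mk, Prod.mk.injEq, nsmul_eq_mul]
        constructor <;> push_cast <;> ring
    rw [hcomp]
    exact hli
  · -- span equality
    set S := Submodule.span k (Set.range f) with hS
    have hxy : x * y = -z ^ (n + 1) := by
      have h0 : (Ideal.Quotient.mk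
          (Ideal.span {(X 0 * X 1 + X 2 ^ (n + 1) : MvPolynomial (Fin 3) k)})
          (X 0 * X 1 + X 2 ^ (n + 1)) : O) = 0 :=
        Ideal.Quotient.eq_zero_iff_mem.mpr (Ideal.subset_span rfl)
      rw [map_add, map_mul, map_pow] at h0
      exact eq_neg_of_add_eq_zero_left h0
    have key : ∀ b a c : ℕ, (1 ≤ b ∨ r ≤ c) → x ^ a * y ^ b * z ^ c ∈ S := by
      intro b
      induction b with
      | zero =>
        intro a c h
        have hc : r ≤ c := by omega
        have heq : x ^ a * y ^ 0 * z ^ c = f (Sum.inl (a, c - r)) := by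
          show _ = x ^ a * z ^ (c - r + r)
          rw [Nat.sub_add_cancel hc]; ring
        rw [heq]; exact Submodule.subset_span ⟨_, rfl⟩
      | succ b ih =>
        intro a c _
        match a with
        | 0 =>
          have heq : x ^ 0 * y ^ (b + 1) * z ^ c = f (Sum.inr (b, c)) := by
            show _ = y ^ (b + 1) * z ^ c; ring
          rw [heq]; exact Submodule.subset_span ⟨_, rfl⟩
        | a + 1 =>
          have heq : x ^ (a + 1) * y ^ (b + 1) * z ^ c
              = -(x ^ a * y ^ b * z ^ (c + n + 1)) := by
            have h1 : x ^ (a + 1) * y ^ (b + 1) * z ^ c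
                = (x * y) * (x ^ a * y ^ b * z ^ c) := by ring
            rw [h1, hxy]; ring
          rw [heq]
          exact S.neg_mem (ih a (c + n + 1) (Or.inr (by omega)))
    have hmon : ∀ (u : Fin 3 →₀ ℕ) (a₀ : k),
        (Ideal.Quotient.mk
            (Ideal.span {(X 0 * X 1 + X 2 ^ (n + 1) : MvPolynomial (Fin 3) k)})
            (monomial u a₀) : O)
          = a₀ • (x ^ (u 0) * y ^ (u 1) * z ^ (u 2)) := by
      intro u a₀
      have hpoly : (monomial u a₀ : MvPolynomial (Fin 3) k)
          = a₀ • (X 0 ^ (u 0) * X 1 ^ (u 1) * X 2 ^ (u 2)) := by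
        rw [MvPolynomial.monomial_eq, MvPolynomial.smul_eq_C_mul]
        congr 1
        rw [Finsupp.prod_fintype _ _ (fun i => pow_zero _), Fin.prod_univ_three]
      rw [hpoly, ← Ideal.Quotient.mkₐ_eq_mk k, map_smul, map_mul, map_mul,
        map_pow, map_pow, map_pow]
      rfl
    have muly : ∀ p : MvPolynomial (Fin 3) k,
        (Ideal.Quotient.mk _ p : O) * y ∈ S ∧ (Ideal.Quotient.mk _ p : O) * z ^ r ∈ S := by
      intro p
      induction p using MvPolynomial.induction_on' with
      | monomial u a₀ =>
        rw [hmon]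
        constructor
        · have heq : (a₀ • (x ^ u 0 * y ^ u 1 * z ^ u 2)) * y
              = a₀ • (x ^ u 0 * y ^ (u 1 + 1) * z ^ u 2) := by
            rw [smul_mul_assoc]; congr 1; ring
          rw [heq]
          exact S.smul_mem _ (key (u 1 + 1) (u 0) (u 2) (Or.inl (by omega)))
        · have heq : (a₀ • (x ^ u 0 * y ^ u 1 * z ^ u 2)) * z ^ r
              = a₀ • (x ^ u 0 * y ^ u 1 * z ^ (u 2 + r)) := by
            rw [smul_mul_assoc]; congr 1; ring
          rw [heq]
          exact S.smul_mem _ (key (u 1) (u 0) (u 2 + r) (Or.inr (by omega)))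
      | add p q hp hq =>
        rw [map_add, add_mul, add_mul]
        exact ⟨S.add_mem hp.1 hq.1, S.add_mem hp.2 hq.2⟩
    apply le_antisymm
    · rw [Submodule.span_le]
      rintro _ ⟨(⟨q, m⟩ | ⟨q, m⟩), rfl⟩ <;>
        simp only [Sum.elim_inl, Sum.elim_inr, Submodule.coe_restrictScalars,
          SetLike.mem_coe, Submodule.restrictScalars_mem]
      · exact Ideal.mem_span_pair.mpr ⟨0, x ^ q * z ^ m, by show _ = x ^ q * z ^ (m + r); ring⟩
      · exact Ideal.mem_span_pair.mpr ⟨y ^ q * z ^ m, 0, by show _ = y ^ (q + 1) * z ^ m; ring⟩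
    · intro v hv
      rw [Submodule.restrictScalars_mem, Ideal.mem_span_pair] at hv
      obtain ⟨a, b, rfl⟩ := hv
      obtain ⟨p, rfl⟩ := Ideal.Quotient.mk_surjective a
      obtain ⟨q, rfl⟩ := Ideal.Quotient.mk_surjective b
      exact S.add_mem (muly p).1 (muly q).2
end

section
/- Let G be the group ℤ/(n+1)ℤ acting on the polynomial ring k[x,y] by the generator sending x ↦ ζx, y ↦ ζ^n y, where ζ ∈ k is a primitive (n+1)-th root of unity. Then the invariant ring k[x,y]^G is generated by u = x^{n+1}, v = y^{n+1}, w = xy, and is isomorphic to k[u,v,w]/(uv − w^{n+1}). -/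
open MvPolynomial


noncomputable section StmtNine

variable {k : Type*} [Field k] {n : ℕ}

lemma stmt9mon2 (d : Fin 2 →₀ ℕ) (c : k) :
    (monomial d c : MvPolynomial (Fin 2) k) = C c * X 0 ^ d 0 * X 1 ^ d 1 := by
  rw [monomial_eq, Finsupp.prod_pow, Fin.prod_univ_two, mul_assoc]

lemma stmt9mon3 (e : Fin 3 →₀ ℕ) (c : k) :
    (monomial e c : MvPolynomial (Fin 3) k) = C c * X 0 ^ e 0 * X 1 ^ e 1 * X 2 ^ e 2 := by
  rw [monomial_eq, Finsupp.prod_pow, Fin.prod_univ_three]; ring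

lemma stmt9_g_monomial (ζ : k) (d : Fin 2 →₀ ℕ) (c : k) :
    aeval (fun i : Fin 2 => if i = 0 then C ζ * X 0 else C (ζ ^ n) * X 1) (monomial d c)
      = monomial d (ζ ^ (d 0 + n * d 1) * c) := by
  rw [aeval_monomial, Finsupp.prod_pow, Fin.prod_univ_two, stmt9mon2]
  simp only [if_pos, if_neg (show (1 : Fin 2) ≠ 0 by decide), algebraMap_eq, mul_pow, ← C_pow,
    pow_add, pow_mul, C_mul]
  ring

end StmtNine

noncomputable section StmtNine2
variable {k : Type*} [Field k] {n : ℕ}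

lemma stmt9_mem_adjoin {d0 d1 : ℕ} (h : (n + 1) ∣ d0 + n * d1) :
    (X 0 ^ d0 * X 1 ^ d1 : MvPolynomial (Fin 2) k) ∈
      Algebra.adjoin k {(X 0 ^ (n + 1) : MvPolynomial (Fin 2) k), X 1 ^ (n + 1), X 0 * X 1} := by
  set T := Algebra.adjoin k {(X 0 ^ (n + 1) : MvPolynomial (Fin 2) k), X 1 ^ (n + 1), X 0 * X 1}
  have hu : (X 0 ^ (n + 1) : MvPolynomial (Fin 2) k) ∈ T := Algebra.subset_adjoin (by simp)
  have hv : (X 1 ^ (n + 1) : MvPolynomial (Fin 2) k) ∈ T := Algebra.subset_adjoin (by simp)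
  have hw : (X 0 * X 1 : MvPolynomial (Fin 2) k) ∈ T := Algebra.subset_adjoin (by simp)
  obtain ⟨m, hm⟩ := h
  rcases le_total d1 d0 with hle | hle
  · have hge : d1 ≤ m := by nlinarith [hm, hle]
    obtain ⟨q, rfl⟩ : ∃ q, m = d1 + q := ⟨m - d1, by omega⟩
    have hd0 : d0 = (n + 1) * q + d1 := by
      have e1 : (n + 1) * (d1 + q) = n * d1 + d1 + ((n + 1) * q) := by ring
      linarith [hm, e1]
    have : (X 0 ^ d0 * X 1 ^ d1 : MvPolynomial (Fin 2) k)
        = (X 0 ^ (n + 1)) ^ q * (X 0 * X 1) ^ d1 := by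
      rw [hd0, pow_add, pow_mul]; ring
    rw [this]
    exact mul_mem (pow_mem hu q) (pow_mem hw d1)
  · have hge : m ≤ d1 := by nlinarith [hm, hle]
    obtain ⟨q, rfl⟩ : ∃ q, d1 = m + q := ⟨d1 - m, by omega⟩
    have hd1' : m = d0 + n * q := by
      have e1 : (n + 1) * m = n * m + m := by ring
      have e2 : n * (m + q) = n * m + n * q := by ring
      linarith [hm, e1, e2]
    have hd1 : m + q = (n + 1) * q + d0 := by
      rw [hd1']; ring
    have : (X 0 ^ d0 * X 1 ^ (m + q) : MvPolynomial (Fin 2) k)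
        = (X 1 ^ (n + 1)) ^ q * (X 0 * X 1) ^ d0 := by
      rw [hd1, pow_add, pow_mul]; ring
    rw [this]
    exact mul_mem (pow_mem hv q) (pow_mem hw d0)

end StmtNine2

noncomputable section StmtNine3
variable {k : Type*} [Field k] {n : ℕ}

lemma stmt9_part1 {ζ : k} (hζ : IsPrimitiveRoot ζ (n + 1)) :
    AlgHom.equalizer
        (aeval (fun i : Fin 2 => if i = 0 then C ζ * X 0 else C (ζ ^ n) * X 1))
        (AlgHom.id k (MvPolynomial (Fin 2) k))
      = Algebra.adjoin k {(X 0 ^ (n + 1) : MvPolynomial (Fin 2) k), X 1 ^ (n + 1), X 0 * X 1} := by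
  set g : MvPolynomial (Fin 2) k →ₐ[k] MvPolynomial (Fin 2) k :=
    aeval (fun i : Fin 2 => if i = 0 then C ζ * X 0 else C (ζ ^ n) * X 1) with hg
  apply le_antisymm
  · intro p hp
    have hgp : g p = p := hp
    nth_rewrite 1 [p.as_sum]
    apply Subalgebra.sum_mem
    intro d hd
    have hgsum : g p = ∑ d' ∈ p.support, monomial d' (ζ ^ (d' 0 + n * d' 1) * coeff d' p) := by
      conv_lhs => rw [p.as_sum]
      rw [map_sum]
      exact Finset.sum_congr rfl fun d' _ => stmt9_g_monomial ζ d' (coeff d' p)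
    have h1 : coeff d (g p) = ζ ^ (d 0 + n * d 1) * coeff d p := by
      rw [hgsum, coeff_sum, Finset.sum_eq_single d]
      · rw [coeff_monomial, if_pos rfl]
      · intro b _ hb; rw [coeff_monomial, if_neg hb]
      · intro hnd; exact absurd hd hnd
    rw [hgp] at h1
    have hc : coeff d p ≠ 0 := mem_support_iff.mp hd
    have hz : ζ ^ (d 0 + n * d 1) = 1 := by
      have h2 : (ζ ^ (d 0 + n * d 1) - 1) * coeff d p = 0 := by
        rw [sub_mul, one_mul, ← h1, sub_self]
      rcases mul_eq_zero.mp h2 with h | h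
      · exact sub_eq_zero.mp h
      · exact absurd h hc
    have hdvd : (n + 1) ∣ d 0 + n * d 1 := (hζ.pow_eq_one_iff_dvd _).mp hz
    rw [stmt9mon2, mul_assoc]
    exact mul_mem (Subalgebra.algebraMap_mem _ (coeff d p)) (stmt9_mem_adjoin hdvd)
  · rw [Algebra.adjoin_le_iff]
    have h10 : (1 : Fin 2) ≠ 0 := by decide
    rintro x hx
    simp only [Set.mem_insert_iff, Set.mem_singleton_iff] at hx
    rcases hx with rfl | rfl | rfl
    · show g (X 0 ^ (n + 1)) = X 0 ^ (n + 1)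
      rw [map_pow, hg, aeval_X, if_pos rfl, mul_pow, ← C_pow, hζ.pow_eq_one, C_1, one_mul]
    · show g (X 1 ^ (n + 1)) = X 1 ^ (n + 1)
      rw [map_pow, hg, aeval_X, if_neg h10, mul_pow, ← C_pow, ← pow_mul, mul_comm n (n+1),
        pow_mul, hζ.pow_eq_one, one_pow, C_1, one_mul]
    · show g (X 0 * X 1) = X 0 * X 1
      rw [map_mul, hg, aeval_X, aeval_X, if_pos rfl, if_neg h10]
      have : (ζ : k) * ζ ^ n = 1 := by
        rw [← pow_succ']; exact hζ.pow_eq_one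
      calc (C ζ * X 0 * (C (ζ ^ n) * X 1) : MvPolynomial (Fin 2) k) = C (ζ * ζ ^ n) * (X 0 * X 1) := by
            rw [C_mul]; ring
        _ = X 0 * X 1 := by rw [this, C_1, one_mul]

end StmtNine3


noncomputable section StmtNine4
variable {k : Type*} [Field k] {n : ℕ}

noncomputable def stmt9F (k : Type*) [Field k] (n : ℕ) (d : Fin 2 →₀ ℕ) :
    MvPolynomial (Fin 3) k ⧸ Ideal.span {(X 0 * X 1 - X 2 ^ (n + 1) : MvPolynomial (Fin 3) k)} :=
  if d 1 ≤ d 0 then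
    Ideal.Quotient.mk _ (X 0 ^ ((d 0 - d 1) / (n + 1)) * X 2 ^ d 1)
  else
    Ideal.Quotient.mk _ (X 1 ^ ((d 1 - d 0) / (n + 1)) * X 2 ^ d 0)

noncomputable def stmt9rho (k : Type*) [Field k] (n : ℕ) :
    MvPolynomial (Fin 2) k →ₗ[k]
      MvPolynomial (Fin 3) k ⧸ Ideal.span {(X 0 * X 1 - X 2 ^ (n + 1) : MvPolynomial (Fin 3) k)} :=
  (MvPolynomial.basisMonomials (Fin 2) k).constr k (stmt9F k n)

lemma stmt9rho_monomial (d : Fin 2 →₀ ℕ) (c : k) :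
    stmt9rho k n (monomial d c) = c • stmt9F k n d := by
  have h : (monomial d c : MvPolynomial (Fin 2) k)
      = c • (MvPolynomial.basisMonomials (Fin 2) k d) := by
    rw [MvPolynomial.coe_basisMonomials]
    simp [smul_monomial]
  rw [h, map_smul, stmt9rho, Module.Basis.constr_basis]

lemma stmt9mon2' (d : Fin 2 →₀ ℕ) (c : k) :
    (monomial d c : MvPolynomial (Fin 2) k) = C c * X 0 ^ d 0 * X 1 ^ d 1 := by
  rw [monomial_eq, Finsupp.prod_pow, Fin.prod_univ_two, mul_assoc]

lemma stmt9aeval_monomial (e : Fin 3 →₀ ℕ) (c : k) :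
    aeval ![(X 0 ^ (n + 1) : MvPolynomial (Fin 2) k), X 1 ^ (n + 1), X 0 * X 1] (monomial e c)
      = monomial (Finsupp.single (0 : Fin 2) ((n + 1) * e 0 + e 2)
          + Finsupp.single (1 : Fin 2) ((n + 1) * e 1 + e 2)) c := by
  rw [aeval_monomial, Finsupp.prod_pow, Fin.prod_univ_three, stmt9mon2', algebraMap_eq]
  simp only [Matrix.cons_val_zero, Matrix.cons_val_one, Matrix.head_cons, Matrix.cons_val_two,
    Matrix.tail_cons, Finsupp.add_apply, Finsupp.single_eq_same,
    Finsupp.single_eq_of_ne (show (0 : Fin 2) ≠ 1 by decide),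
    Finsupp.single_eq_of_ne (show (1 : Fin 2) ≠ 0 by decide), add_zero, zero_add]
  ring

end StmtNine4

noncomputable section StmtNine5
variable {k : Type*} [Field k] {n : ℕ}

lemma stmt9mon3' (e : Fin 3 →₀ ℕ) (c : k) :
    (monomial e c : MvPolynomial (Fin 3) k) = C c * X 0 ^ e 0 * X 1 ^ e 1 * X 2 ^ e 2 := by
  rw [monomial_eq, Finsupp.prod_pow, Fin.prod_univ_three]; ring

lemma stmt9smulmk (c : k) (z : MvPolynomial (Fin 3) k) :
    c • Ideal.Quotient.mk
        (Ideal.span {(X 0 * X 1 - X 2 ^ (n + 1) : MvPolynomial (Fin 3) k)}) z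
      = Ideal.Quotient.mk _ (C c * z) := by
  rw [← smul_eq_C_mul, ← Ideal.Quotient.mkₐ_eq_mk k, map_smul]

set_option synthInstance.maxHeartbeats 1000000 in
set_option maxHeartbeats 1000000 in
lemma stmt9key (e : Fin 3 →₀ ℕ) (c : k) :
    stmt9rho k n (aeval ![(X 0 ^ (n + 1) : MvPolynomial (Fin 2) k), X 1 ^ (n + 1), X 0 * X 1]
        (monomial e c))
      = Ideal.Quotient.mk _ (monomial e c) := by
  rw [stmt9aeval_monomial, stmt9rho_monomial]
  set d := Finsupp.single (0 : Fin 2) ((n + 1) * e 0 + e 2)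
      + Finsupp.single (1 : Fin 2) ((n + 1) * e 1 + e 2) with hd
  have hd0 : d 0 = (n + 1) * e 0 + e 2 := by
    simp [hd, Finsupp.single_eq_of_ne (show (1 : Fin 2) ≠ 0 by decide)]
  have hd1 : d 1 = (n + 1) * e 1 + e 2 := by
    simp [hd, Finsupp.single_eq_of_ne (show (0 : Fin 2) ≠ 1 by decide)]
  rcases le_or_gt (e 1) (e 0) with hle | hlt
  · obtain ⟨m, hm⟩ : ∃ m, e 0 = e 1 + m := ⟨e 0 - e 1, by omega⟩
    have hba : d 1 ≤ d 0 := by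
      rw [hd0, hd1, hm, mul_add]
      generalize (n + 1) * e 1 = A
      generalize (n + 1) * m = B
      omega
    have hsub : (d 0 - d 1) / (n + 1) = m := by
      have h1 : d 0 - d 1 = (n + 1) * m := by
        rw [hd0, hd1, hm, mul_add]
        generalize (n + 1) * e 1 = A
        generalize (n + 1) * m = B
        omega
      rw [h1, Nat.mul_div_cancel_left m (Nat.succ_pos n)]
    rw [stmt9F, if_pos hba, hsub, hd1, stmt9smulmk, stmt9mon3', hm]
    rw [Ideal.Quotient.eq]
    refine Ideal.mem_span_singleton.mpr ?_
    have factor : C c * (X 0 ^ m * X 2 ^ ((n + 1) * e 1 + e 2))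
          - C c * X 0 ^ (e 1 + m) * X 1 ^ e 1 * X 2 ^ e 2
        = (C c * X 0 ^ m * X 2 ^ e 2)
            * ((X 2 ^ (n + 1)) ^ e 1 - (X 0 * X 1) ^ e 1) := by
      ring
    have hdvd := ((dvd_sub_comm.mp
      (sub_dvd_pow_sub_pow (X 0 * X 1 : MvPolynomial (Fin 3) k) (X 2 ^ (n + 1)) (e 1)))).mul_left
      (C c * X 0 ^ m * X 2 ^ e 2)
    convert hdvd using 1
    ring
  · obtain ⟨m, hm⟩ : ∃ m, e 1 = e 0 + m := ⟨e 1 - e 0, by omega⟩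
    have hba : ¬ d 1 ≤ d 0 := by
      rw [hd0, hd1, hm, mul_add]
      have hm1 : 1 ≤ m := by omega
      have : (n + 1) * 1 ≤ (n + 1) * m := Nat.mul_le_mul_left _ hm1
      generalize (n + 1) * e 0 = A at *
      generalize (n + 1) * m = B at *
      omega
    have hsub : (d 1 - d 0) / (n + 1) = m := by
      have h1 : d 1 - d 0 = (n + 1) * m := by
        rw [hd0, hd1, hm, mul_add]
        generalize (n + 1) * e 0 = A
        generalize (n + 1) * m = B
        omega
      rw [h1, Nat.mul_div_cancel_left m (Nat.succ_pos n)]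
    rw [stmt9F, if_neg hba, hsub, hd0, stmt9smulmk, stmt9mon3', hm]
    rw [Ideal.Quotient.eq]
    refine Ideal.mem_span_singleton.mpr ?_
    have factor : C c * (X 1 ^ m * X 2 ^ ((n + 1) * e 0 + e 2))
          - C c * X 0 ^ e 0 * X 1 ^ (e 0 + m) * X 2 ^ e 2
        = (C c * X 1 ^ m * X 2 ^ e 2)
            * ((X 2 ^ (n + 1)) ^ e 0 - (X 0 * X 1) ^ e 0) := by
      ring
    have hdvd := ((dvd_sub_comm.mp
      (sub_dvd_pow_sub_pow (X 0 * X 1 : MvPolynomial (Fin 3) k) (X 2 ^ (n + 1)) (e 0)))).mul_left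
      (C c * X 1 ^ m * X 2 ^ e 2)
    convert hdvd using 1
    ring

set_option synthInstance.maxHeartbeats 1000000 in
set_option maxHeartbeats 1000000 in
lemma stmt9rho_aeval (q : MvPolynomial (Fin 3) k) :
    stmt9rho k n (aeval ![(X 0 ^ (n + 1) : MvPolynomial (Fin 2) k), X 1 ^ (n + 1), X 0 * X 1] q)
      = Ideal.Quotient.mk _ q := by
  conv_lhs => rw [q.as_sum]
  conv_rhs => rw [q.as_sum]
  rw [map_sum, map_sum, map_sum]
  exact Finset.sum_congr rfl fun e _ => stmt9key e (coeff e q)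

end StmtNine5

/- STATEMENT 9: Let G = ℤ/(n+1)ℤ act on k[x,y] with a generator acting by x ↦ ζx, y ↦ ζⁿy
for a primitive (n+1)-th root of unity ζ ∈ k.  Then the invariant ring k[x,y]^G (the
equalizer of the generating algebra automorphism and the identity) is generated by
u = x^{n+1}, v = y^{n+1}, w = xy, and is isomorphic to k[u,v,w]/(uv − w^{n+1}) via an
isomorphism matching u, v, w with these generators. -/
set_option maxHeartbeats 1000000 in
set_option synthInstance.maxHeartbeats 1000000 in
theorem stmt9 (k : Type*) [Field k] (n : ℕ) (ζ : k) (hζ : IsPrimitiveRoot ζ (n + 1)) :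
    let R := MvPolynomial (Fin 2) k
    let g : R →ₐ[k] R :=
      aeval (fun i : Fin 2 => if i = 0 then C ζ * X 0 else C (ζ ^ n) * X 1)
    let S : Subalgebra k R := AlgHom.equalizer g (AlgHom.id k R)
    S = Algebra.adjoin k {(X 0 ^ (n + 1) : R), X 1 ^ (n + 1), X 0 * X 1} ∧
      ∃ φ : (MvPolynomial (Fin 3) k ⧸
              Ideal.span {(X 0 * X 1 - X 2 ^ (n + 1) : MvPolynomial (Fin 3) k)}) ≃ₐ[k] S,
        ((φ (Ideal.Quotient.mk _ (X 0)) : R) = X 0 ^ (n + 1)) ∧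
        ((φ (Ideal.Quotient.mk _ (X 1)) : R) = X 1 ^ (n + 1)) ∧
        ((φ (Ideal.Quotient.mk _ (X 2)) : R) = X 0 * X 1) := by
  intro R g S
  have hS : S = Algebra.adjoin k {(X 0 ^ (n + 1) : R), X 1 ^ (n + 1), X 0 * X 1} :=
    stmt9_part1 hζ
  refine ⟨hS, ?_⟩
  set I : Ideal (MvPolynomial (Fin 3) k) :=
    Ideal.span {(X 0 * X 1 - X 2 ^ (n + 1) : MvPolynomial (Fin 3) k)} with hI
  set ψ : MvPolynomial (Fin 3) k →ₐ[k] R :=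
    aeval ![(X 0 ^ (n + 1) : R), X 1 ^ (n + 1), X 0 * X 1] with hψ
  have hset : Set.range ![(X 0 ^ (n + 1) : R), X 1 ^ (n + 1), X 0 * X 1]
      = {(X 0 ^ (n + 1) : R), X 1 ^ (n + 1), X 0 * X 1} := by
    ext x
    constructor
    · rintro ⟨i, rfl⟩
      fin_cases i <;> simp
    · intro hx
      simp only [Set.mem_insert_iff, Set.mem_singleton_iff] at hx
      rcases hx with rfl | rfl | rfl
      exacts [⟨0, rfl⟩, ⟨1, rfl⟩, ⟨2, rfl⟩]
  have hmem : ∀ q, ψ q ∈ S := by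
    intro q
    rw [hS, ← hset, Algebra.adjoin_range_eq_range_aeval]
    exact ⟨q, rfl⟩
  set ψ' : MvPolynomial (Fin 3) k →ₐ[k] S := ψ.codRestrict S hmem with hψ'
  have hsurj : Function.Surjective ψ' := by
    rintro ⟨x, hx⟩
    rw [hS, ← hset, Algebra.adjoin_range_eq_range_aeval] at hx
    obtain ⟨q, hq⟩ := hx
    exact ⟨q, Subtype.ext hq⟩
  have hker : RingHom.ker ψ' = I := by
    ext q
    rw [RingHom.mem_ker]
    constructor
    · intro hq
      have h0 : ψ q = 0 := by
        have h1 : (ψ' q : R) = 0 := by rw [hq]; rfl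
        simpa [hψ'] using h1
      have h2 := stmt9rho_aeval (k := k) (n := n) q
      rw [show aeval ![(X 0 ^ (n + 1) : R), X 1 ^ (n + 1), X 0 * X 1] q = ψ q from rfl,
        h0, map_zero] at h2
      exact Ideal.Quotient.eq_zero_iff_mem.mp h2.symm
    · intro hq
      obtain ⟨r, rfl⟩ := Ideal.mem_span_singleton.mp hq
      have hgen : ψ (X 0 * X 1 - X 2 ^ (n + 1)) = 0 := by
        simp only [hψ, map_sub, map_mul, map_pow, aeval_X, Matrix.cons_val_zero,
          Matrix.cons_val_one, Matrix.head_cons, Matrix.cons_val_two, Matrix.tail_cons]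
        rw [mul_pow, sub_self]
      apply Subtype.ext
      show ψ ((X 0 * X 1 - X 2 ^ (n + 1)) * r) = 0
      rw [map_mul, hgen, zero_mul]
  refine ⟨(Ideal.quotientEquivAlgOfEq k hker.symm).trans
    (Ideal.quotientKerAlgEquivOfSurjective hsurj), ?_, ?_, ?_⟩
  · rw [AlgEquiv.trans_apply, Ideal.quotientEquivAlgOfEq_mk,
      Ideal.quotientKerAlgEquivOfSurjective_mk]
    show ψ (X 0) = _
    simp [hψ]
  · rw [AlgEquiv.trans_apply, Ideal.quotientEquivAlgOfEq_mk,
      Ideal.quotientKerAlgEquivOfSurjective_mk]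
    show ψ (X 1) = _
    simp [hψ]
  · rw [AlgEquiv.trans_apply, Ideal.quotientEquivAlgOfEq_mk,
      Ideal.quotientKerAlgEquivOfSurjective_mk]
    show ψ (X 2) = _
    simp [hψ]
end

section
/- Let K be a free abelian group of finite rank with a class δ ∈ K and suppose R ⊂ K (the set of 'roots') has the property that R maps to a finite set under the projection K → K/ℤδ. Let Z : K → ℂ be a homomorphism with Z(δ) ≠ 0 and let S ⊂ R be any subset ('classes of stable objects') with Z(α) ≠ 0 for α ∈ S. Then for every homomorphism U : K → ℂ, the quantity sup_{α ∈ S} |U(α)|/|Z(α)| is finite. -/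
/-- Auxiliary: for fixed `a b c d : ℂ` with `d ≠ 0`, the ratio `|a+kb|/|c+kd|`
is bounded uniformly in `k : ℤ` (note `x/0 = 0` in Lean, so no nonvanishing needed). -/
lemma aux_bound (a b c d : ℂ) (hd : d ≠ 0) :
    ∃ M : ℝ, ∀ k : ℤ, ‖a + k * b‖ / ‖c + k * d‖ ≤ M := by
  set A := ‖a‖ with hA
  set B := ‖b‖ with hB
  set C := ‖c‖ with hC
  set D := ‖d‖ with hD
  have hDpos : 0 < D := by simpa [hD] using (norm_pos_iff.mpr hd)
  have hA0 : 0 ≤ A := norm_nonneg a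
  have hB0 : 0 ≤ B := norm_nonneg b
  set N : ℕ := ⌈(2 * C) / D⌉₊ + 1 with hN
  refine ⟨max ((2 * A + 2 * B) / D)
    (∑ k ∈ Finset.Icc (-(N : ℤ)) (N : ℤ),
      ‖a + k * b‖ / ‖c + k * d‖), fun k => ?_⟩
  by_cases hk : |k| ≤ (N : ℤ)
  · refine le_trans ?_ (le_max_right _ _)
    refine Finset.single_le_sum (f := fun k : ℤ =>
      ‖a + k * b‖ / ‖c + k * d‖) ?_ ?_
    · intro i _
      positivity
    · rw [Finset.mem_Icc]
      exact ⟨neg_le_of_abs_le hk, le_of_abs_le hk⟩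
  · refine le_trans ?_ (le_max_left _ _)
    push_neg at hk
    have hk1 : (1 : ℝ) ≤ |(k : ℝ)| := by
      have h0 : (0 : ℤ) < |k| := lt_of_le_of_lt (Int.natCast_nonneg N) hk
      have h1 : (1 : ℤ) ≤ |k| := h0
      calc (1 : ℝ) ≤ ((|k| : ℤ) : ℝ) := by exact_mod_cast h1
        _ = |(k : ℝ)| := by push_cast; ring
    have hkC : 2 * C ≤ |(k : ℝ)| * D := by
      have h1 : (2 * C) / D ≤ (N : ℝ) := by
        have h := Nat.le_ceil ((2 * C) / D)
        have h2 : ((⌈(2 * C) / D⌉₊ : ℕ) : ℝ) ≤ (N : ℝ) := by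
          exact_mod_cast Nat.le_succ _
        linarith
      have h2 : (N : ℝ) ≤ |(k : ℝ)| := by
        have h3 : ((N : ℤ) : ℝ) ≤ ((|k| : ℤ) : ℝ) := by exact_mod_cast hk.le
        calc (N : ℝ) = ((N : ℤ) : ℝ) := by push_cast; ring
          _ ≤ ((|k| : ℤ) : ℝ) := h3
          _ = |(k : ℝ)| := by push_cast; ring
      calc 2 * C = ((2 * C) / D) * D := by field_simp
        _ ≤ (N : ℝ) * D := by nlinarith
        _ ≤ |(k : ℝ)| * D := by nlinarith
    -- lower bound for the denominator
    have hkd : ‖(k : ℂ) * d‖ = |(k : ℝ)| * D := by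
      rw [norm_mul, hD]
      congr 1
      simpa using Complex.norm_intCast k
    have hden : |(k : ℝ)| * D / 2 ≤ ‖c + k * d‖ := by
      have h1 := norm_sub_norm_le ((k : ℂ) * d) (-c)
      simp only [norm_neg, sub_neg_eq_add] at h1
      rw [hkd] at h1
      have h2 : ‖(k : ℂ) * d + c‖ = ‖c + k * d‖ := by
        rw [add_comm]
      rw [h2] at h1
      have hc : ‖c‖ = C := rfl
      linarith
    have hnum : ‖a + k * b‖ ≤ A + |(k : ℝ)| * B := by
      have h1 := norm_add_le a ((k : ℂ) * b)
      have hkb : ‖(k : ℂ) * b‖ = |(k : ℝ)| * B := by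
        rw [norm_mul, hB]
        congr 1
        simpa using Complex.norm_intCast k
      rw [hkb] at h1
      exact h1
    have hdenpos : 0 < |(k : ℝ)| * D / 2 := by nlinarith
    calc ‖a + k * b‖ / ‖c + k * d‖
        ≤ (A + |(k : ℝ)| * B) / (|(k : ℝ)| * D / 2) := by
          apply div_le_div₀ (by positivity) hnum hdenpos hden
      _ ≤ (2 * A + 2 * B) / D := by
          rw [div_le_div_iff₀ hdenpos hDpos]
          nlinarith [mul_le_mul_of_nonneg_right
            (mul_le_mul_of_nonneg_left hk1 hA0) hDpos.le]

/- STATEMENT 18: Let K be a free abelian group of finite rank, δ ∈ K, R ⊂ K a set of 'roots'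
whose image in K/ℤδ is finite, Z : K → ℂ a homomorphism with Z(δ) ≠ 0, and S ⊆ R a set of
'classes of stable objects' with Z(α) ≠ 0 for α ∈ S.  Then for every homomorphism U : K → ℂ
the quantity sup_{α ∈ S} |U(α)|/|Z(α)| is finite. -/
theorem stmt18 {K : Type*} [AddCommGroup K] [Module.Free ℤ K] [Module.Finite ℤ K]
    (δ : K) (R S : Set K) (hSR : S ⊆ R)
    (hfin : (((QuotientAddGroup.mk' (AddSubgroup.zmultiples δ))) '' R).Finite)
    (Z : K →+ ℂ) (hZδ : Z δ ≠ 0) (hZS : ∀ α ∈ S, Z α ≠ 0) :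
    ∀ U : K →+ ℂ, ∃ M : ℝ, ∀ α ∈ S, ‖U α‖ / ‖Z α‖ ≤ M := by
  intro U
  set π := QuotientAddGroup.mk' (AddSubgroup.zmultiples δ) with hπ
  -- per-coset bound
  have key : ∀ q ∈ π '' R, ∃ Mq : ℝ, ∀ α, π α = q →
      ‖U α‖ / ‖Z α‖ ≤ Mq := by
    rintro q ⟨r, hr, rfl⟩
    obtain ⟨Mq, hMq⟩ := aux_bound (U r) (U δ) (Z r) (Z δ) hZδ
    refine ⟨Mq, fun α hα => ?_⟩
    have hmem : -r + α ∈ AddSubgroup.zmultiples δ := by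
      rw [hπ, QuotientAddGroup.mk'_apply, QuotientAddGroup.mk'_apply] at hα
      exact (QuotientAddGroup.eq).mp hα.symm
    obtain ⟨k, hk⟩ := AddSubgroup.mem_zmultiples_iff.mp hmem
    have hαeq : α = r + k • δ := by rw [hk]; abel
    have hU : U α = U r + k * U δ := by
      rw [hαeq, map_add, map_zsmul, zsmul_eq_mul]
    have hZ : Z α = Z r + k * Z δ := by
      rw [hαeq, map_add, map_zsmul, zsmul_eq_mul]
    rw [hU, hZ]
    exact hMq k
  classical
  -- choose bounds and sum them up
  choose! g hg using key
  refine ⟨∑ q ∈ hfin.toFinset, |g q|, fun α hα => ?_⟩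
  have hmem : π α ∈ π '' R := ⟨α, hSR hα, rfl⟩
  calc ‖U α‖ / ‖Z α‖ ≤ g (π α) := hg (π α) hmem α rfl
    _ ≤ |g (π α)| := le_abs_self _
    _ ≤ ∑ q ∈ hfin.toFinset, |g q| := by
        refine Finset.single_le_sum (f := fun q => |g q|) (fun i _ => abs_nonneg (g i)) ?_
        exact hfin.mem_toFinset.mpr hmem
end
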